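/- Let N ≥ 1 be a natural number, k an integer, Z a complex number, Q a nonzero complex number, and τ : ℤ × ℤ → ℂ a nowhere-vanishing function satisfying the non-autonomous Hirota bilinear equation τ_{n,m+1}·τ_{n,m−1} = τ_{n,m}² + Z·Q^{kn−Nm}·τ_{n+1,m}·τ_{n−1,m} for all (n,m) ∈ ℤ², together with the boundary condition τ_{n+N,m+k} = τ_{n,m} for all (n,m). Define x_{n,m} := Z·Q^{kn−Nm+N}·τ_{n−1,m−1}·τ_{n+1,m−1}·τ_{n,m−1}^{−2}. Then x satisfies the periodicity x_{n+N,m+k} = x_{n,m} and the Y-system x_{n,m+1}·x_{n,m−1}·(1 + x_{n,m})² = x_{n,m}²·(1 + x_{n+1,m})·(1 + x_{n−1,m}) for all (n,m) ∈ ℤ². -/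

import Mathlib

/-- A nowhere-vanishing solution of the non-autonomous Hirota bilinear equation with periodic
boundary conditions gives, via `x_{n,m} = Z·Q^{kn-Nm+N}·τ_{n-1,m-1}·τ_{n+1,m-1}·τ_{n,m-1}^{-2}`,
a periodic solution of the Y-system. -/
theorem hirota_to_Ysystem (N : ℕ) (hN : 1 ≤ N) (k : ℤ) (Z Q : ℂ) (hQ : Q ≠ 0)
    (τ : ℤ → ℤ → ℂ) (hτ : ∀ n m : ℤ, τ n m ≠ 0)
    (hHirota : ∀ n m : ℤ, τ n (m + 1) * τ n (m - 1) =
      (τ n m) ^ 2 + Z * Q ^ (k * n - (N : ℤ) * m) * τ (n + 1) m * τ (n - 1) m)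
    (hper : ∀ n m : ℤ, τ (n + N) (m + k) = τ n m)
    (x : ℤ → ℤ → ℂ)
    (hx : ∀ n m : ℤ, x n m = Z * Q ^ (k * n - (N : ℤ) * m + (N : ℤ)) *
      τ (n - 1) (m - 1) * τ (n + 1) (m - 1) * ((τ n (m - 1)) ^ 2)⁻¹) :
    (∀ n m : ℤ, x (n + N) (m + k) = x n m) ∧
    (∀ n m : ℤ, x n (m + 1) * x n (m - 1) * (1 + x n m) ^ 2 =
      (x n m) ^ 2 * (1 + x (n + 1) m) * (1 + x (n - 1) m)) := by
  have h1 : ∀ n m : ℤ, 1 + x n m = τ n m * τ n (m - 2) * ((τ n (m - 1)) ^ 2)⁻¹ := by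
    intro n m
    have hH := hHirota n (m - 1)
    have e1 : m - 1 + 1 = m := by ring
    have e2 : m - 1 - 1 = m - 2 := by ring
    have e3 : k * n - (N : ℤ) * (m - 1) = k * n - (N : ℤ) * m + N := by ring
    rw [e1, e2, e3] at hH
    rw [hx, hH]
    have d := pow_ne_zero 2 (hτ n (m - 1))
    rw [add_mul _ _ ((τ n (m - 1)) ^ 2)⁻¹, mul_inv_cancel₀ d]
    ring
  constructor
  · intro n m
    rw [hx, hx]
    have e1 : n + (N : ℤ) - 1 = n - 1 + N := by ring
    have e2 : n + (N : ℤ) + 1 = n + 1 + N := by ring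
    have e3 : m + k - 1 = m - 1 + k := by ring
    have e4 : k * (n + N) - (N : ℤ) * (m + k) + N = k * n - N * m + N := by ring
    rw [e1, e2, e3, e4, hper, hper, hper]
  · intro n m
    rw [h1 n m, h1 (n + 1) m, h1 (n - 1) m, hx n (m + 1), hx n (m - 1), hx n m]
    have e1 : m + 1 - 1 = m := by ring
    have e2 : m - 1 - 1 = m - 2 := by ring
    rw [e1, e2]
    have d1 := hτ n (m - 1)
    have d2 := hτ n m
    have d3 := hτ n (m - 2)
    have d4 := hτ (n + 1) (m - 1)
    have d5 := hτ (n - 1) (m - 1)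
    have hQ1 : Q ^ (k * n - (N : ℤ) * (m + 1) + N) * Q ^ (k * n - (N : ℤ) * (m - 1) + N) =
        Q ^ (k * n - (N : ℤ) * m + N) * Q ^ (k * n - (N : ℤ) * m + N) := by
      rw [← zpow_add₀ hQ, ← zpow_add₀ hQ]; ring_nf
    field_simp
    linear_combination (Z^2 * τ (n-1) m * τ (n+1) m * τ (n-1) (m-2) * τ (n+1) (m-2)) * hQ1
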